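/- arXiv:1204.5755 — 3 statements merged into one kernel-verified Lean document; each statement's English description precedes it below -/
import Mathlib

section
/- If a recurrent infinite word has a factor whose abelian class has exactly one semi-abelian return, then the word is periodic. -/
/-- The factor of length `n` of the infinite word `w` starting at position `i`. -/
def wordAt {α : Type*} (w : ℕ → α) (i n : ℕ) : List α :=
  (List.range n).map (fun k => w (i + k))

/-- `u` is a factor of the infinite word `w`. -/
def IsFactorW {α : Type*} (w : ℕ → α) (u : List α) : Prop :=
  ∃ i, u = wordAt w i u.length

/-- `w` is recurrent: every factor occurs infinitely often. -/
def RecurrentW {α : Type*} (w : ℕ → α) : Prop :=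
  ∀ u, IsFactorW w u → ∀ N, ∃ i, N ≤ i ∧ u = wordAt w i u.length

/-- `w` is (purely) periodic. -/
def PeriodicW {α : Type*} (w : ℕ → α) : Prop :=
  ∃ T, 0 < T ∧ ∀ n, w (n + T) = w n

/-- `w` is ultimately periodic. -/
def UltPeriodicW {α : Type*} (w : ℕ → α) : Prop :=
  ∃ T, 0 < T ∧ ∃ n₀, ∀ n, n₀ ≤ n → w (n + T) = w n

/-- Two finite words are abelian equivalent: same number of occurrences of each letter. -/
def AbEquiv {α : Type*} [DecidableEq α] (u v : List α) : Prop :=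
  ∀ a : α, u.count a = v.count a

/-- Positions of occurrences of words abelian equivalent to `u` in `w`. -/
def abOcc {α : Type*} [DecidableEq α] (w : ℕ → α) (u : List α) : Set ℕ :=
  {i | AbEquiv (wordAt w i u.length) u}

/-- The semi-abelian returns to (the abelian class of) `u` in `w`: words extending from one
occurrence of the abelian class of `u` to the next one. -/
def semiAbReturns {α : Type*} [DecidableEq α] (w : ℕ → α) (u : List α) : Set (List α) :=
  {r | ∃ i j, i ∈ abOcc w u ∧ j ∈ abOcc w u ∧ i < j ∧
      (∀ k, i < k → k < j → k ∉ abOcc w u) ∧ r = wordAt w i (j - i)}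

/-- Positions of (exact) occurrences of `u` in `w`. -/
def occW {α : Type*} [DecidableEq α] (w : ℕ → α) (u : List α) : Set ℕ :=
  {i | u = wordAt w i u.length}

/-- The ordinary return words of `u` in `w`. -/
def returnWords {α : Type*} [DecidableEq α] (w : ℕ → α) (u : List α) : Set (List α) :=
  {r | ∃ i j, i ∈ occW w u ∧ j ∈ occW w u ∧ i < j ∧
      (∀ k, i < k → k < j → k ∉ occW w u) ∧ r = wordAt w i (j - i)}

/-- `u` has exactly `k` semi-abelian returns in `w`. -/
def ExactlyKSemiAbReturns {α : Type*} [DecidableEq α] (w : ℕ → α) (u : List α) (k : ℕ) : Prop :=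
  ∃ f : Fin k → List α, Function.Injective f ∧ semiAbReturns w u = Set.range f

/-- `u` has exactly `k` abelian returns in `w`: there are `k` pairwise non-abelian-equivalent
representatives so that every semi-abelian return is abelian equivalent to exactly one of them,
and each representative is realized. -/
def ExactlyKAbReturns {α : Type*} [DecidableEq α] (w : ℕ → α) (u : List α) (k : ℕ) : Prop :=
  ∃ f : Fin k → List α,
    (∀ i j, AbEquiv (f i) (f j) → i = j) ∧
    (∀ r ∈ semiAbReturns w u, ∃ i, AbEquiv r (f i)) ∧
    (∀ i, ∃ r ∈ semiAbReturns w u, AbEquiv r (f i))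

/-- `u` has at most `k` abelian returns in `w`. -/
def AtMostKAbReturns {α : Type*} [DecidableEq α] (w : ℕ → α) (u : List α) (k : ℕ) : Prop :=
  ∃ f : Fin k → List α, ∀ r ∈ semiAbReturns w u, ∃ i, AbEquiv r (f i)

/-- `u` has at least `k` abelian returns in `w`. -/
def AtLeastKAbReturns {α : Type*} [DecidableEq α] (w : ℕ → α) (u : List α) (k : ℕ) : Prop :=
  ∃ f : Fin k → List α,
    (∀ i j, AbEquiv (f i) (f j) → i = j) ∧
    (∀ i, ∃ r ∈ semiAbReturns w u, AbEquiv r (f i))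

/-- `u` has at least two semi-abelian returns in `w`. -/
def AtLeastTwoSemiAbReturns {α : Type*} [DecidableEq α] (w : ℕ → α) (u : List α) : Prop :=
  ∃ r₁ r₂, r₁ ∈ semiAbReturns w u ∧ r₂ ∈ semiAbReturns w u ∧ r₁ ≠ r₂

/-- The factor complexity of `w`. -/
noncomputable def complexityW {α : Type*} (w : ℕ → α) (n : ℕ) : ℕ :=
  {u : List α | u.length = n ∧ IsFactorW w u}.ncard

/-- A Sturmian word: aperiodic binary word with factor complexity `n + 1`. -/
def SturmianW (w : ℕ → Bool) : Prop :=
  ¬ UltPeriodicW w ∧ ∀ n, complexityW w n = n + 1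

/-- Right special factor of a binary word. -/
def RightSpecial (w : ℕ → Bool) (B : List Bool) : Prop :=
  IsFactorW w (B ++ [false]) ∧ IsFactorW w (B ++ [true])

/-- Left special factor of a binary word. -/
def LeftSpecial (w : ℕ → Bool) (B : List Bool) : Prop :=
  IsFactorW w (false :: B) ∧ IsFactorW w (true :: B)

/-- Bispecial factor of a binary word. -/
def Bispecial (w : ℕ → Bool) (B : List Bool) : Prop :=
  RightSpecial w B ∧ LeftSpecial w B

/-- `w` is `c`-balanced. -/
def CBalanced {α : Type*} [DecidableEq α] (w : ℕ → α) (c : ℕ) : Prop :=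
  ∀ u v : List α, IsFactorW w u → IsFactorW w v → u.length = v.length →
    ∀ a : α, |((u.count a : ℤ) - (v.count a : ℤ))| ≤ (c : ℤ)

lemma wordAt_length {α : Type*} (w : ℕ → α) (i n : ℕ) : (wordAt w i n).length = n := by
  simp [wordAt]

lemma wordAt_ext {α : Type*} {w : ℕ → α} {i j n : ℕ}
    (h : wordAt w i n = wordAt w j n) (k : ℕ) (hk : k < n) : w (i + k) = w (j + k) := by
  have h1 : (wordAt w i n)[k]'(by simpa [wordAt] using hk)
      = (wordAt w j n)[k]'(by simpa [wordAt] using hk) := by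
    simp only [h]
  simpa [wordAt] using h1

/-- If a recurrent word has a factor with exactly one semi-abelian return, then the word
is periodic. -/
theorem stmt3 {α : Type*} [DecidableEq α] (w : ℕ → α) (hrec : RecurrentW w)
    (h : ∃ u, IsFactorW w u ∧ u ≠ [] ∧ ExactlyKSemiAbReturns w u 1) :
    PeriodicW w := by
  classical
  obtain ⟨u, hu, hne, f, hinj, hran⟩ := h
  set r := f 0 with hr
  have hret : ∀ s ∈ semiAbReturns w u, s = r := by
    intro s hs
    rw [hran] at hs
    obtain ⟨i, rfl⟩ := hs
    exact congrArg f (Subsingleton.elim i 0)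
  have hS : ∀ N, ∃ i, N ≤ i ∧ i ∈ abOcc w u := by
    intro N
    obtain ⟨i, hNi, hi⟩ := hrec u hu N
    refine ⟨i, hNi, ?_⟩
    intro a
    rw [← hi]
  set T := r.length with hT
  have key : ∀ i ∈ abOcc w u, (i + T) ∈ abOcc w u ∧ wordAt w i T = r ∧ 0 < T := by
    intro i hi
    have hex : ∃ j, i < j ∧ j ∈ abOcc w u := by
      obtain ⟨j, hj1, hj2⟩ := hS (i + 1)
      exact ⟨j, hj1, hj2⟩
    set j := Nat.find hex with hjdef
    have hj : i < j ∧ j ∈ abOcc w u := Nat.find_spec hex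
    have hmin : ∀ k, i < k → k < j → k ∉ abOcc w u := by
      intro k hik hkj hkS
      exact Nat.find_min hex hkj ⟨hik, hkS⟩
    have hmem : wordAt w i (j - i) ∈ semiAbReturns w u :=
      ⟨i, j, hi, hj.2, hj.1, hmin, rfl⟩
    have heq := hret _ hmem
    have hlen : j - i = T := by
      have := congrArg List.length heq
      simpa [wordAt_length] using this
    have hji : j = i + T := by omega
    refine ⟨hji ▸ hj.2, ?_, ?_⟩
    · rw [hlen] at heq; exact heq
    · have := hj.1; omega
  obtain ⟨i₀, hi₀e⟩ := hu
  have hi₀ : i₀ ∈ abOcc w u := by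
    intro a; rw [← hi₀e]
  have hT0 : 0 < T := (key i₀ hi₀).2.2
  have cover : ∀ n, i₀ ≤ n → ∃ i, i ∈ abOcc w u ∧ i ≤ n ∧ n < i + T := by
    intro n hn
    induction n, hn using Nat.le_induction with
    | base => exact ⟨i₀, hi₀, le_refl _, by omega⟩
    | succ n hn ih =>
      obtain ⟨i, hiS, h1, h2⟩ := ih
      by_cases hc : n + 1 < i + T
      · exact ⟨i, hiS, by omega, hc⟩
      · exact ⟨i + T, (key i hiS).1, by omega, by omega⟩
  have hper : ∀ n, i₀ ≤ n → w (n + T) = w n := by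
    intro n hn
    obtain ⟨i, hiS, h1, h2⟩ := cover n hn
    have hw1 : wordAt w i T = r := (key i hiS).2.1
    have hw2 : wordAt w (i + T) T = r := (key (i + T) (key i hiS).1).2.1
    have hext := wordAt_ext (hw2.trans hw1.symm) (n - i) (by omega)
    have e1 : i + T + (n - i) = n + T := by omega
    have e2 : i + (n - i) = n := by omega
    rw [e1, e2] at hext
    exact hext
  refine ⟨T, hT0, fun n => ?_⟩
  have hp : IsFactorW w (wordAt w 0 (n + T + 1)) := ⟨0, by rw [wordAt_length]⟩
  obtain ⟨j, hj, hje⟩ := hrec _ hp i₀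
  rw [wordAt_length] at hje
  have hext := wordAt_ext hje
  have h1 := hext n (by omega)
  have h2 := hext (n + T) (by omega)
  have h3 := hper (j + n) (by omega)
  simp only [Nat.zero_add] at h1 h2
  rw [h2, show j + (n + T) = j + n + T by omega, h3, ← h1]
end

section
/- Let w be a recurrent balanced infinite binary word. Then w is either Sturmian or periodic; and if w is periodic, then w contains a factor having exactly one semi-abelian return. -/
namespace SB
variable {α : Type*}

@[simp] lemma wordAt_length (w : ℕ → α) (i n : ℕ) : (wordAt w i n).length = n := by
  simp [wordAt]

lemma wordAt_eq_iff {w : ℕ → α} {i j n : ℕ} :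
    wordAt w i n = wordAt w j n ↔ ∀ k < n, w (i + k) = w (j + k) := by
  constructor
  · intro h k hk
    have := congrArg (fun l => l[k]?) h
    simpa [wordAt, hk] using this
  · intro h
    apply List.ext_getElem (by simp)
    intro k hk _
    simp only [wordAt, List.getElem_map, List.getElem_range]
    exact h k (by simpa [wordAt] using hk)

lemma wordAt_succ_right (w : ℕ → α) (i n : ℕ) :
    wordAt w i (n + 1) = wordAt w i n ++ [w (i + n)] := by
  simp [wordAt, List.range_succ]

lemma wordAt_succ_left (w : ℕ → α) (i n : ℕ) :
    wordAt w i (n + 1) = w i :: wordAt w (i + 1) n := by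
  simp [wordAt, List.range_succ_eq_map, List.map_map, Function.comp]
  intro k _; ring_nf

@[simp] lemma wordAt_zero (w : ℕ → α) (i : ℕ) : wordAt w i 0 = [] := by simp [wordAt]

lemma dropLast_wordAt (w : ℕ → α) (i n : ℕ) :
    (wordAt w i (n + 1)).dropLast = wordAt w i n := by
  rw [wordAt_succ_right]; simp

lemma tail_wordAt (w : ℕ → α) (i n : ℕ) :
    (wordAt w i (n + 1)).tail = wordAt w (i + 1) n := by
  rw [wordAt_succ_left]; simp

lemma isFactor_wordAt (w : ℕ → α) (i n : ℕ) : IsFactorW w (wordAt w i n) :=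
  ⟨i, by rw [wordAt_length]⟩

lemma isFactor_nil (w : ℕ → α) : IsFactorW w ([] : List α) := ⟨0, by simp⟩

lemma isFactor_tail {w : ℕ → α} {a : α} {l : List α} (h : IsFactorW w (a :: l)) :
    IsFactorW w l := by
  obtain ⟨i, hi⟩ := h
  have : (a :: l).length = l.length + 1 := by simp
  rw [this, wordAt_succ_left] at hi
  exact ⟨i + 1, (List.cons.injEq _ _ _ _ ▸ hi).2⟩

lemma isFactor_dropLast {w : ℕ → α} {l : List α} (h : IsFactorW w l) :
    IsFactorW w l.dropLast := by
  obtain ⟨i, hi⟩ := h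
  cases' l with a t
  · exact isFactor_nil w
  · have hlen : (a :: t).length = t.length + 1 := by simp
    refine ⟨i, ?_⟩
    have := congrArg List.dropLast hi
    rw [hlen, dropLast_wordAt] at this
    rw [this]; congr 1
    simp [List.length_dropLast]

/-- counting `true`s in a window -/
def cnt (w : ℕ → Bool) (i n : ℕ) : ℕ := (wordAt w i n).count true

def ind (w : ℕ → Bool) (i : ℕ) : ℕ := if w i = true then 1 else 0

lemma cnt_zero (w : ℕ → Bool) (i : ℕ) : cnt w i 0 = 0 := by simp [cnt]

lemma cnt_succ (w : ℕ → Bool) (i n : ℕ) :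
    cnt w i (n + 1) = cnt w i n + ind w (i + n) := by
  simp [cnt, wordAt_succ_right, ind, List.count_append]
  cases h : w (i + n) <;> simp [h]

lemma cnt_succ_left (w : ℕ → Bool) (i n : ℕ) :
    cnt w i (n + 1) = ind w i + cnt w (i + 1) n := by
  simp [cnt, wordAt_succ_left, ind, List.count_cons]
  cases h : w i <;> simp [h, Nat.add_comm]

lemma cnt_eq_sum (w : ℕ → Bool) (i n : ℕ) :
    cnt w i n = ∑ k ∈ Finset.range n, ind w (i + k) := by
  induction n with
  | zero => simp [cnt_zero]
  | succ n ih => rw [cnt_succ, ih, Finset.sum_range_succ]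


section Periodic
variable {w : ℕ → Bool}

lemma period_shift {T : ℕ} (hT : ∀ m, w (m + T) = w m) (m k : ℕ) :
    w (m + k * T) = w m := by
  induction k with
  | zero => simp
  | succ k ih => have : m + (k+1) * T = (m + k * T) + T := by ring
                 rw [this, hT, ih]

lemma wordAt_mod {T : ℕ} (hT : ∀ m, w (m + T) = w m) (i n : ℕ) :
    wordAt w i n = wordAt w (i % T) n := by
  rw [wordAt_eq_iff]
  intro k _
  conv_lhs => rw [show i + k = (i % T + k) + (i / T) * T by
    conv_lhs => rw [← Nat.mod_add_div' i T]
    ring]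
  exact period_shift hT _ _

lemma cnt_mod {T : ℕ} (hT : ∀ m, w (m + T) = w m) (i n : ℕ) :
    cnt w i n = cnt w (i % T) n := by
  unfold cnt; rw [wordAt_mod hT]

lemma sum_ind_shift {T : ℕ} (hT : ∀ m, w (m + T) = w m) (k : ℕ) :
    ∑ i ∈ Finset.range T, ind w (i + k) = ∑ i ∈ Finset.range T, ind w i := by
  induction k with
  | zero => simp
  | succ k ih =>
    have h1 : ∑ i ∈ Finset.range (T+1), ind w (i + k)
        = (∑ i ∈ Finset.range T, ind w (i + 1 + k)) + ind w (0 + k) :=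
      Finset.sum_range_succ' _ _
    have h2 : ∑ i ∈ Finset.range (T+1), ind w (i + k)
        = (∑ i ∈ Finset.range T, ind w (i + k)) + ind w (T + k) :=
      Finset.sum_range_succ _ _
    have h3 : ind w (T + k) = ind w (0 + k) := by
      unfold ind
      rw [show T + k = k + T by ring, hT k]
      simp
    have h4 : ∀ i, i + 1 + k = i + (k+1) := by intro i; ring
    calc ∑ i ∈ Finset.range T, ind w (i + (k+1))
        = ∑ i ∈ Finset.range T, ind w (i + 1 + k) := by
          apply Finset.sum_congr rfl; intro i _; rw [h4]
      _ = ∑ i ∈ Finset.range T, ind w (i + k) := by omega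
      _ = _ := ih

lemma sum_cnt {T : ℕ} (hT : ∀ m, w (m + T) = w m) (n : ℕ) :
    ∑ i ∈ Finset.range T, cnt w i n = n * cnt w 0 T := by
  have : ∀ i, cnt w i n = ∑ k ∈ Finset.range n, ind w (i + k) := fun i => cnt_eq_sum w i n
  calc ∑ i ∈ Finset.range T, cnt w i n
      = ∑ i ∈ Finset.range T, ∑ k ∈ Finset.range n, ind w (i + k) := by
        apply Finset.sum_congr rfl; intro i _; exact this i
    _ = ∑ k ∈ Finset.range n, ∑ i ∈ Finset.range T, ind w (i + k) :=
        Finset.sum_comm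
    _ = ∑ k ∈ Finset.range n, ∑ i ∈ Finset.range T, ind w i := by
        apply Finset.sum_congr rfl; intro k _; exact sum_ind_shift hT k
    _ = n * cnt w 0 T := by
        rw [Finset.sum_const, Finset.card_range]
        rw [cnt_eq_sum]
        simp

lemma cnt_balanced (hbal : CBalanced w 1) (i j n : ℕ) :
    cnt w i n ≤ cnt w j n + 1 := by
  have := hbal (wordAt w i n) (wordAt w j n) (isFactor_wordAt w i n)
    (isFactor_wordAt w j n) (by simp) true
  unfold cnt
  have h := abs_le.mp this
  omega

end Periodic

section Counting
variable {w : ℕ → Bool}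

/-- Key counting lemma: for a `T`-periodic 1-balanced word, the windows of length `n`
have counts `q` or `q+1`, and exactly `(n*p) % T` residues mod `T` achieve `q+1`. -/
lemma counting (hbal : CBalanced w 1) {T : ℕ} (hT0 : 0 < T) (hT : ∀ m, w (m + T) = w m)
    (n : ℕ) :
    ∃ q, (∀ i, cnt w i n = q ∨ cnt w i n = q + 1) ∧
      ((Finset.range T).filter (fun i => cnt w i n = q + 1)).card
        = (n * cnt w 0 T) % T := by
  classical
  set p := cnt w 0 T with hp
  have hne : ((Finset.range T).image (fun i => cnt w i n)).Nonempty := by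
    simp [Finset.image_nonempty, Finset.nonempty_range_iff]; omega
  set q := ((Finset.range T).image (fun i => cnt w i n)).min' hne with hq
  obtain ⟨imin, himin, himinq⟩ := Finset.mem_image.mp
    (((Finset.range T).image (fun i => cnt w i n)).min'_mem hne)
  have hub : ∀ i, cnt w i n ≤ q + 1 := by
    intro i
    have h2 := cnt_balanced hbal i imin n
    rw [himinq, ← hq] at h2
    exact h2
  have hlb : ∀ i, q ≤ cnt w i n := by
    intro i
    rw [cnt_mod hT]
    exact Finset.min'_le _ _ (Finset.mem_image.mpr ⟨i % T, by
      simp [Finset.mem_range]; exact Nat.mod_lt _ hT0, rfl⟩)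
  have hval : ∀ i, cnt w i n = q ∨ cnt w i n = q + 1 := by
    intro i; have := hub i; have := hlb i; omega
  refine ⟨q, hval, ?_⟩
  set A := (Finset.range T).filter (fun i => cnt w i n = q + 1) with hA
  have hsum : ∑ i ∈ Finset.range T, cnt w i n = T * q + A.card := by
    have : ∀ i ∈ Finset.range T,
        cnt w i n = q + (if cnt w i n = q + 1 then 1 else 0) := by
      intro i _
      rcases hval i with h | h <;> simp [h]
    rw [Finset.sum_congr rfl this, Finset.sum_add_distrib, Finset.sum_const,
      Finset.card_range, Finset.sum_boole]
    simp [hA, smul_eq_mul]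
  have hAcard : A.card < T := by
    have : imin ∉ A := by
      simp only [hA, Finset.mem_filter]
      rintro ⟨-, h⟩
      omega
    have hsub : A ⊆ (Finset.range T).erase imin :=
      fun x hx => Finset.mem_erase.mpr ⟨fun he => this (he ▸ hx),
        (Finset.mem_filter.mp hx).1⟩
    calc A.card ≤ ((Finset.range T).erase imin).card := Finset.card_le_card hsub
      _ < T := by
          rw [Finset.card_erase_of_mem himin, Finset.card_range]
          omega
  have heq : n * p = T * q + A.card := by rw [← hsum, sum_cnt hT]
  rw [heq, Nat.mul_comm T q, Nat.add_comm, Nat.add_mul_mod_self_right,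
    Nat.mod_eq_of_lt hAcard]

end Counting

section Coprime
variable {w : ℕ → Bool}

lemma ind_eq_iff {i j : ℕ} : ind w i = ind w j ↔ w i = w j := by
  unfold ind
  cases h1 : w i <;> cases h2 : w j <;> simp

lemma const_window_period (hconst : ∀ i j, cnt w i n = cnt w j n) :
    ∀ m, w (m + n) = w m := by
  intro m
  have h1 : cnt w m (n + 1) = cnt w m n + ind w (m + n) := cnt_succ w m n
  have h2 : cnt w m (n + 1) = ind w m + cnt w (m + 1) n := cnt_succ_left w m n
  have h3 : cnt w m n = cnt w (m + 1) n := hconst _ _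
  have : ind w (m + n) = ind w m := by omega
  exact ind_eq_iff.mp this

lemma periodic_coprime (hbal : CBalanced w 1) {T : ℕ} (hT0 : 0 < T)
    (hT : ∀ m, w (m + T) = w m)
    (hmin : ∀ t, 0 < t → t < T → ¬ (∀ m, w (m + t) = w m)) :
    Nat.Coprime (cnt w 0 T) T := by
  classical
  set p := cnt w 0 T with hp
  by_contra hcop
  set d := Nat.gcd p T with hd
  have hdT : d ∣ T := Nat.gcd_dvd_right p T
  have hdp : d ∣ p := Nat.gcd_dvd_left p T
  have hd0 : 0 < d := Nat.gcd_pos_of_pos_right p hT0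
  have hd2 : 2 ≤ d := by
    rcases Nat.lt_or_ge d 2 with h | h
    · exfalso
      have h1 : d = 1 := by omega
      exact hcop (show Nat.gcd p T = 1 from hd ▸ h1)
    · exact h
  set n := T / d with hn
  have hn0 : 0 < n := Nat.div_pos (Nat.le_of_dvd hT0 hdT) hd0
  have hnT : n < T := Nat.div_lt_self hT0 hd2
  have hdvd : T ∣ n * p := by
    obtain ⟨p', hp'⟩ := hdp
    refine ⟨p', ?_⟩
    rw [hp', hn]
    rw [show T / d * (d * p') = (T / d * d) * p' by ring, Nat.div_mul_cancel hdT]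
  obtain ⟨q, hval, hcard⟩ := counting hbal hT0 hT n
  have hmod : (n * p) % T = 0 := by
    obtain ⟨c, hc⟩ := hdvd
    rw [hc]; exact Nat.mul_mod_right T c
  rw [← hp, hmod, Finset.card_eq_zero] at hcard
  have hq : ∀ i, cnt w i n = q := by
    intro i
    rcases hval i with h | h
    · exact h
    · exfalso
      have hi : i % T ∈ Finset.range T := Finset.mem_range.mpr (Nat.mod_lt _ hT0)
      have : i % T ∈ (Finset.range T).filter (fun i => cnt w i n = q + 1) := by
        refine Finset.mem_filter.mpr ⟨hi, ?_⟩
        rw [← cnt_mod hT]; exact h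
      rw [hcard] at this
      exact absurd this (Finset.notMem_empty _)
  exact hmin n hn0 hnT (const_window_period (fun i j => (hq i).trans (hq j).symm))

end Coprime

section Returns
variable {w : ℕ → Bool}

lemma count_false_add_count_true (l : List Bool) :
    l.count false + l.count true = l.length := by
  induction l with
  | nil => simp
  | cons a t ih => cases a <;> simp [List.count_cons] <;> omega

lemma abEquiv_iff_cnt {i j n : ℕ} :
    AbEquiv (wordAt w i n) (wordAt w j n) ↔ cnt w i n = cnt w j n := by
  constructor
  · intro h; exact h true
  · intro h a
    cases a
    · have h1 := count_false_add_count_true (wordAt w i n)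
      have h2 := count_false_add_count_true (wordAt w j n)
      rw [wordAt_length] at h1 h2
      unfold cnt at h
      omega
    · exact h

lemma mod_gap {T i j i₀ : ℕ} (hi : i % T = i₀) (hj : j % T = i₀)
    (hij : i < j) : i + T ≤ j := by
  have h : T ∣ j - i := (Nat.modEq_iff_dvd' (le_of_lt hij)).mp (hi.trans hj.symm)
  have := Nat.le_of_dvd (by omega) h
  omega

lemma ret_one {T i₀ n : ℕ} (hT0 : 0 < T) (hT : ∀ m, w (m + T) = w m)
    (hn : 0 < n) (hi₀ : i₀ < T)
    (hS : abOcc w (wordAt w i₀ n) = {i | i % T = i₀}) :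
    ExactlyKSemiAbReturns w (wordAt w i₀ n) 1 := by
  have hsingle : semiAbReturns w (wordAt w i₀ n) = {wordAt w i₀ T} := by
    ext r
    simp only [Set.mem_singleton_iff]
    constructor
    · rintro ⟨i, j, hi, hj, hij, hgap, rfl⟩
      rw [hS] at hi hj
      simp only [Set.mem_setOf_eq] at hi hj
      have hiT : (i + T) % T = i₀ := by rw [Nat.add_mod_right]; exact hi
      have h1 : i + T ≤ j := mod_gap hi hj hij
      have h2 : j = i + T := by
        by_contra hne
        have hlt : i + T < j := by omega
        exact hgap (i + T) (by omega) hlt (by rw [hS]; exact hiT)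
      have h3 : j - i = T := by omega
      rw [h3, wordAt_mod hT, hi, ← Nat.mod_eq_of_lt hi₀, ← wordAt_mod hT]
    · rintro rfl
      refine ⟨i₀, i₀ + T, ?_, ?_, by omega, ?_, by simp⟩
      · rw [hS]; exact Nat.mod_eq_of_lt hi₀
      · rw [hS]
        show (i₀ + T) % T = i₀
        rw [Nat.add_mod_right]; exact Nat.mod_eq_of_lt hi₀
      · intro k hk1 hk2 hk
        rw [hS] at hk
        have := mod_gap (Nat.mod_eq_of_lt hi₀) hk hk1
        omega
  refine ⟨fun _ => wordAt w i₀ T, Function.injective_of_subsingleton _, ?_⟩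
  rw [hsingle]
  exact (Set.range_const).symm

lemma w_const_of_period_one (hT : ∀ m, w (m + 1) = w m) : ∀ i, w i = w 0 := by
  intro i
  induction i with
  | zero => rfl
  | succ i ih => rw [hT i]; exact ih

lemma periodic_case (hbal : CBalanced w 1) (hper : PeriodicW w) :
    ∃ u, IsFactorW w u ∧ u ≠ [] ∧ ExactlyKSemiAbReturns w u 1 := by
  classical
  have hex : ∃ T, 0 < T ∧ ∀ m, w (m + T) = w m := hper
  obtain ⟨hT0, hT⟩ := Nat.find_spec hex
  set T := Nat.find hex with hTdef
  have hmin : ∀ t, 0 < t → t < T → ¬ (∀ m, w (m + t) = w m) := by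
    intro t ht0 htT hper'
    exact Nat.find_min hex htT ⟨ht0, hper'⟩
  rcases eq_or_lt_of_le (Nat.one_le_iff_ne_zero.mpr (by omega) : 1 ≤ T) with h1 | h2
  · -- T = 1 : constant word
    refine ⟨wordAt w 0 1, isFactor_wordAt w 0 1, by simp [wordAt], ?_⟩
    have hT1 : ∀ m, w (m + 1) = w m := by rw [h1]; exact hT
    refine ret_one (T := 1) (i₀ := 0) one_pos hT1 one_pos one_pos ?_
    ext i
    simp only [abOcc, Set.mem_setOf_eq, wordAt_length, Nat.mod_one]
    constructor
    · intro _; trivial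
    · intro _
      have : wordAt w i 1 = wordAt w 0 1 := by
        rw [wordAt_eq_iff]
        intro k hk
        interval_cases k
        simpa using (w_const_of_period_one hT1 i)
      rw [this]
      intro a; rfl
  · -- 2 ≤ T
    set p := cnt w 0 T with hp
    have hcop : Nat.Coprime p T := periodic_coprime hbal hT0 hT hmin
    obtain ⟨m, -, hm⟩ := Nat.exists_mul_mod_eq_one_of_coprime hcop h2
    set n := m with hn
    have hmod1 : (n * p) % T = 1 := by rw [Nat.mul_comm]; exact hm
    have hn0 : 0 < n := by
      rcases Nat.eq_zero_or_pos n with h | h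
      · rw [h] at hmod1; simp at hmod1
      · exact h
    obtain ⟨q, hval, hcard⟩ := counting hbal hT0 hT n
    rw [← hp, hmod1, Finset.card_eq_one] at hcard
    obtain ⟨i₀, hi₀⟩ := hcard
    have hi₀mem : i₀ ∈ (Finset.range T).filter (fun i => cnt w i n = q + 1) := by
      rw [hi₀]; exact Finset.mem_singleton_self i₀
    have hi₀T : i₀ < T := Finset.mem_range.mp (Finset.mem_filter.mp hi₀mem).1
    have hi₀cnt : cnt w i₀ n = q + 1 := (Finset.mem_filter.mp hi₀mem).2
    have hS : abOcc w (wordAt w i₀ n) = {i | i % T = i₀} := by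
      ext i
      simp only [abOcc, Set.mem_setOf_eq, wordAt_length]
      rw [abEquiv_iff_cnt]
      constructor
      · intro h
        have hc : cnt w (i % T) n = q + 1 := by
          rw [← cnt_mod hT, h, hi₀cnt]
        have : i % T ∈ (Finset.range T).filter (fun i => cnt w i n = q + 1) :=
          Finset.mem_filter.mpr ⟨Finset.mem_range.mpr (Nat.mod_lt _ hT0), hc⟩
        rw [hi₀] at this
        exact Finset.mem_singleton.mp this
      · intro h
        rw [cnt_mod hT, h, hi₀cnt]
    exact ⟨wordAt w i₀ n, isFactor_wordAt w i₀ n,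
      by simp [← List.length_pos_iff, hn0], ret_one hT0 hT hn0 hi₀T hS⟩

end Returns

section Rec
variable {α : Type*} {w : ℕ → α}

lemma rec_ult_periodic (hrec : RecurrentW w) (hup : UltPeriodicW w) : PeriodicW w := by
  obtain ⟨T, hT0, n₀, hper⟩ := hup
  refine ⟨T, hT0, fun n => ?_⟩
  obtain ⟨i, hi, hocc⟩ := hrec (wordAt w 0 (n + T + 1)) (isFactor_wordAt w 0 _) n₀
  rw [wordAt_length] at hocc
  have hpt : ∀ k < n + T + 1, w (0 + k) = w (i + k) := wordAt_eq_iff.mp hocc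
  have e1 : w (n + T) = w (i + (n + T)) := by
    have := hpt (n + T) (by omega); simpa using this
  have e2 : w n = w (i + n) := by
    have := hpt n (by omega); simpa using this
  have e3 : w (i + n + T) = w (i + n) := hper (i + n) (by omega)
  calc w (n + T) = w (i + (n + T)) := e1
    _ = w (i + n) := by rw [show i + (n + T) = (i + n) + T by ring]; exact e3
    _ = w n := e2.symm

end Rec

section Sturmian
variable {w : ℕ → Bool}

def Fset (w : ℕ → Bool) (n : ℕ) : Set (List Bool) := {u | u.length = n ∧ IsFactorW w u}

lemma complexity_eq (w : ℕ → Bool) (n : ℕ) : complexityW w n = (Fset w n).ncard := rfl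

lemma Fset_finite (w : ℕ → Bool) (n : ℕ) : (Fset w n).Finite := by
  apply (Set.finite_range (fun f : Fin n → Bool => List.ofFn f)).subset
  rintro u ⟨hlen, -⟩
  refine ⟨fun k => u.get ⟨k.1, by omega⟩, ?_⟩
  apply List.ext_getElem (by simp [hlen])
  intro k h1 h2
  simp [List.getElem_ofFn]

lemma Fset_zero (w : ℕ → Bool) : Fset w 0 = {[]} := by
  ext u
  simp only [Fset, Set.mem_setOf_eq, Set.mem_singleton_iff, List.length_eq_zero_iff]
  constructor
  · rintro ⟨h, -⟩; exact h
  · rintro rfl; exact ⟨rfl, isFactor_nil w⟩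

lemma rs_unique (hbal : CBalanced w 1) :
    ∀ n (B₁ B₂ : List Bool), B₁.length = n → B₂.length = n →
      RightSpecial w B₁ → RightSpecial w B₂ → B₁ = B₂ := by
  intro n
  induction n with
  | zero =>
    intro B₁ B₂ h1 h2 _ _
    rw [List.length_eq_zero_iff] at h1 h2
    rw [h1, h2]
  | succ n ih =>
    intro B₁ B₂ h1 h2 hB₁ hB₂
    cases' B₁ with a₁ C₁
    · simp at h1
    cases' B₂ with a₂ C₂
    · simp at h2
    have tl : ∀ (a : Bool) (C : List Bool), RightSpecial w (a :: C) → RightSpecial w C := by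
      rintro a C ⟨hf, ht⟩
      exact ⟨isFactor_tail (by simpa using hf), isFactor_tail (by simpa using ht)⟩
    have hC : C₁ = C₂ := ih C₁ C₂ (by simpa using h1) (by simpa using h2)
      (tl _ _ hB₁) (tl _ _ hB₂)
    subst hC
    by_cases ha : a₁ = a₂
    · rw [ha]
    · exfalso
      have key : ∀ (C : List Bool), IsFactorW w ((false :: C) ++ [false]) →
          IsFactorW w ((true :: C) ++ [true]) → False := by
        intro C hu hv
        have := hbal _ _ hu hv (by simp) true
        simp [List.count_append, List.count_cons] at this
        have h2 := abs_le.mp this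
        omega
      cases ha₁ : a₁ <;> cases ha₂ : a₂ <;> simp_all
      · exact key C₁ hB₁.1 hB₂.2
      · exact key C₁ hB₂.1 hB₁.2

end Sturmian

section MH
variable {w : ℕ → Bool}

lemma prop_ult {n : ℕ} (hn : 0 < n)
    (det : ∀ i j, wordAt w i n = wordAt w j n → w (i + n) = w (j + n))
    {i j : ℕ} (hij : i < j) (hw : wordAt w i n = wordAt w j n) : UltPeriodicW w := by
  have key : ∀ k, wordAt w (i + k) n = wordAt w (j + k) n := by
    intro k
    induction k with
    | zero => simpa using hw
    | succ k ih =>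
      have hd : w (i + k + n) = w (j + k + n) := det _ _ ih
      rw [wordAt_eq_iff] at ih ⊢
      intro m hm
      rcases Nat.lt_or_ge (m + 1) n with h | h
      · have := ih (m + 1) h
        rw [show i + (k+1) + m = i + k + (m+1) by ring,
          show j + (k+1) + m = j + k + (m+1) by ring]
        exact this
      · have hm1 : m + 1 = n := by omega
        rw [show i + (k+1) + m = i + k + n by omega,
          show j + (k+1) + m = j + k + n by omega]
        exact hd
  refine ⟨j - i, by omega, i, fun m hm => ?_⟩
  have h0 := (wordAt_eq_iff.mp (key (m - i))) 0 hn
  rw [show i + (m - i) + 0 = m by omega, show j + (m - i) + 0 = m + (j - i) by omega] at h0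
  exact h0.symm

lemma noRS_ultper {n : ℕ} (h : ¬ ∃ B : List Bool, B.length = n ∧ RightSpecial w B) :
    UltPeriodicW w := by
  have det : ∀ i j, wordAt w i n = wordAt w j n → w (i + n) = w (j + n) := by
    intro i j hw
    by_contra hne
    apply h
    refine ⟨wordAt w i n, wordAt_length w i n, ?_⟩
    have f1 : IsFactorW w (wordAt w i n ++ [w (i + n)]) := by
      rw [← wordAt_succ_right]; exact isFactor_wordAt w i (n + 1)
    have f2 : IsFactorW w (wordAt w i n ++ [w (j + n)]) := by
      rw [hw, ← wordAt_succ_right]; exact isFactor_wordAt w j (n + 1)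
    have hcases : (w (i+n) = false ∧ w (j+n) = true) ∨ (w (i+n) = true ∧ w (j+n) = false) := by
      cases h1 : w (i + n) <;> cases h2 : w (j + n) <;> simp_all
    rcases hcases with ⟨e1, e2⟩ | ⟨e1, e2⟩
    · exact ⟨e1 ▸ f1, e2 ▸ f2⟩
    · exact ⟨e2 ▸ f2, e1 ▸ f1⟩
  rcases Nat.eq_zero_or_pos n with rfl | hn
  · refine ⟨1, one_pos, 0, fun m _ => ?_⟩
    have := det (m + 1) m (by simp)
    simpa using this
  · obtain ⟨i, j, hne, hfe⟩ :=
      Finite.exists_ne_map_eq_of_infinite (fun i (k : Fin n) => w (i + k))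
    have hw : wordAt w i n = wordAt w j n :=
      wordAt_eq_iff.mpr fun k hk => congrFun hfe ⟨k, hk⟩
    rcases Nat.lt_or_gt_of_ne hne with hij | hij
    · exact prop_ult hn det hij hw
    · exact prop_ult hn det hij hw.symm

/-- dropLast maps F(n+1) into F(n) -/
lemma dropLast_mem {n : ℕ} {u : List Bool} (hu : u ∈ Fset w (n + 1)) :
    u.dropLast ∈ Fset w n := by
  obtain ⟨hlen, hf⟩ := hu
  exact ⟨by simp [List.length_dropLast, hlen], isFactor_dropLast hf⟩

lemma dropLast_surj {n : ℕ} : Set.SurjOn List.dropLast (Fset w (n + 1)) (Fset w n) := by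
  rintro u ⟨hlen, i, hocc⟩
  refine ⟨wordAt w i (n + 1), ⟨by simp, isFactor_wordAt w i (n + 1)⟩, ?_⟩
  rw [dropLast_wordAt, ← hlen, ← hocc]

/-- if two distinct elts of F(n+1) share dropLast, that dropLast is right special -/
lemma rs_of_collision {n : ℕ} {u v : List Bool} (hu : u ∈ Fset w (n + 1))
    (hv : v ∈ Fset w (n + 1)) (hne : u ≠ v) (hd : u.dropLast = v.dropLast) :
    u.dropLast.length = n ∧ RightSpecial w u.dropLast ∧
      (u = u.dropLast ++ [true] ∨ v = u.dropLast ++ [true]) := by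
  obtain ⟨hul, huf⟩ := hu
  obtain ⟨hvl, hvf⟩ := hv
  have hu0 : u ≠ [] := by intro h; rw [h] at hul; simp at hul
  have hv0 : v ≠ [] := by intro h; rw [h] at hvl; simp at hvl
  have hue : u.dropLast ++ [u.getLast hu0] = u := List.dropLast_append_getLast hu0
  have hve : v.dropLast ++ [v.getLast hv0] = v := List.dropLast_append_getLast hv0
  have hgl : u.getLast hu0 ≠ v.getLast hv0 := by
    intro h
    apply hne
    rw [← hue, ← hve, hd, h]
  have hcases : (u.getLast hu0 = false ∧ v.getLast hv0 = true) ∨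
      (u.getLast hu0 = true ∧ v.getLast hv0 = false) := by
    cases h1 : u.getLast hu0 <;> cases h2 : v.getLast hv0 <;> simp_all
  refine ⟨by simp [List.length_dropLast, hul], ?_, ?_⟩
  · constructor
    · rcases hcases with ⟨e1, e2⟩ | ⟨e1, e2⟩
      · rw [← e1, hue]; exact huf
      · rw [hd, ← e2, hve]; exact hvf
    · rcases hcases with ⟨e1, e2⟩ | ⟨e1, e2⟩
      · rw [hd, ← e2, hve]; exact hvf
      · rw [← e1, hue]; exact huf
  · rcases hcases with ⟨e1, e2⟩ | ⟨e1, e2⟩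
    · right; rw [hd, ← e2, hve]
    · left; rw [← e1, hue]

lemma step_le (hbal : CBalanced w 1) (n : ℕ) :
    complexityW w (n + 1) ≤ complexityW w n + 1 := by
  classical
  rw [complexity_eq, complexity_eq]
  by_cases hrs : ∃ B : List Bool, B.length = n ∧ RightSpecial w B
  · obtain ⟨B, hBl, hBrs⟩ := hrs
    have hinj : Set.InjOn List.dropLast (Fset w (n + 1) \ {B ++ [true]}) := by
      rintro x ⟨hx, hxne⟩ y ⟨hy, hyne⟩ hxy
      by_contra hne
      obtain ⟨hlen, hrs', hor⟩ := rs_of_collision hx hy hne hxy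
      have hBeq : x.dropLast = B := rs_unique hbal n _ _ hlen hBl hrs' hBrs
      rw [hBeq] at hor
      simp only [Set.mem_singleton_iff] at hxne hyne
      rcases hor with h | h
      · exact hxne h
      · exact hyne h
    calc (Fset w (n + 1)).ncard
        ≤ (insert (B ++ [true]) (Fset w (n + 1) \ {B ++ [true]})).ncard := by
          apply Set.ncard_le_ncard
          · intro x hx
            by_cases h : x = B ++ [true]
            · exact Set.mem_insert_iff.mpr (Or.inl h)
            · exact Set.mem_insert_iff.mpr (Or.inr ⟨hx, h⟩)
          · exact (((Fset_finite w (n+1)).diff).insert _)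
      _ ≤ (Fset w (n + 1) \ {B ++ [true]}).ncard + 1 := Set.ncard_insert_le _ _
      _ ≤ (Fset w n).ncard + 1 := by
          have := Set.ncard_le_ncard_of_injOn List.dropLast
            (fun a ha => dropLast_mem (Set.mem_of_mem_diff ha)) hinj (Fset_finite w n)
          omega
  · have hinj : Set.InjOn List.dropLast (Fset w (n + 1)) := by
      rintro x hx y hy hxy
      by_contra hne
      obtain ⟨hlen, hrs', -⟩ := rs_of_collision hx hy hne hxy
      exact hrs ⟨x.dropLast, hlen, hrs'⟩
    have := Set.ncard_le_ncard_of_injOn List.dropLast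
      (fun a ha => dropLast_mem ha) hinj (Fset_finite w n)
    omega

lemma step_lt (hup : ¬ UltPeriodicW w) (n : ℕ) :
    complexityW w n < complexityW w (n + 1) := by
  classical
  rw [complexity_eq, complexity_eq]
  by_cases hrs : ∃ B : List Bool, B.length = n ∧ RightSpecial w B
  swap
  · exact absurd (noRS_ultper hrs) hup
  obtain ⟨B, hBl, hBrs⟩ := hrs
  have hmem : B ++ [true] ∈ Fset w (n + 1) := by
    refine ⟨by simp [hBl], hBrs.2⟩
  have himg : Fset w n ⊆ List.dropLast '' (Fset w (n + 1) \ {B ++ [true]}) := by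
    intro u hu
    obtain ⟨v, hv, hvd⟩ := dropLast_surj hu
    by_cases h : v = B ++ [true]
    · refine ⟨B ++ [false], ⟨⟨by simp [hBl], hBrs.1⟩, ?_⟩, ?_⟩
      · simp
      · rw [← hvd, h]; simp
    · exact ⟨v, ⟨hv, h⟩, hvd⟩
  calc (Fset w n).ncard
      ≤ (List.dropLast '' (Fset w (n + 1) \ {B ++ [true]})).ncard :=
        Set.ncard_le_ncard himg (((Fset_finite w (n+1)).diff).image _)
    _ ≤ (Fset w (n + 1) \ {B ++ [true]}).ncard :=
        Set.ncard_image_le ((Fset_finite w (n+1)).diff)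
    _ < (Fset w (n + 1)).ncard := by
        have h1 := Set.ncard_diff_singleton_add_one hmem (Fset_finite w (n+1))
        omega

lemma complexity_formula (hbal : CBalanced w 1) (hup : ¬ UltPeriodicW w) (n : ℕ) :
    complexityW w n = n + 1 := by
  induction n with
  | zero => rw [complexity_eq, Fset_zero]; simp
  | succ n ih =>
    have h1 := step_le hbal n
    have h2 := step_lt hup n
    omega

end MH
end SB

/-- A recurrent balanced binary word is Sturmian or periodic, and if periodic it has a
factor with exactly one semi-abelian return. -/
theorem stmt14 (w : ℕ → Bool) (hrec : RecurrentW w) (hbal : CBalanced w 1) :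
    (SturmianW w ∨ PeriodicW w) ∧
      (PeriodicW w → ∃ u, IsFactorW w u ∧ u ≠ [] ∧ ExactlyKSemiAbReturns w u 1) := by
  by_cases hup : UltPeriodicW w
  · have hper : PeriodicW w := SB.rec_ult_periodic hrec hup
    exact ⟨Or.inr hper, fun _ => SB.periodic_case hbal hper⟩
  · refine ⟨Or.inl ⟨hup, SB.complexity_formula hbal hup⟩, fun hper => ?_⟩
    exact absurd (by obtain ⟨T, hT0, hT⟩ := hper; exact ⟨T, hT0, 0, fun n _ => hT n⟩ : UltPeriodicW w) hup
end

section
/- In the Thue–Morse word, the abelian class of the factor 01 has exactly four semi-abelian returns, namely {0, 1, 01, 10}, and exactly three abelian returns. -/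
/-- The Thue–Morse word (here via the binary digit-sum parity definition of the fixed
point of `0 ↦ 01, 1 ↦ 10` starting with `0`). -/
def thueMorse : ℕ → Bool := fun n => (Nat.digits 2 n).count 1 % 2 == 1

lemma tm0 : thueMorse 0 = false := by simp [thueMorse]

lemma tm_even (n : ℕ) : thueMorse (2 * n) = thueMorse n := by
  rcases Nat.eq_zero_or_pos n with rfl | hn
  · rfl
  · unfold thueMorse
    rw [Nat.digits_def' (by norm_num : 1 < 2) (by omega : 0 < 2 * n)]
    have h1 : 2 * n % 2 = 0 := by omega
    have h2 : 2 * n / 2 = n := by omega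
    rw [h1, h2]
    simp

lemma tm_odd (n : ℕ) : thueMorse (2 * n + 1) = !thueMorse n := by
  unfold thueMorse
  rw [Nat.digits_def' (by norm_num : 1 < 2) (by omega : 0 < 2 * n + 1)]
  have h1 : (2 * n + 1) % 2 = 1 := by omega
  have h2 : (2 * n + 1) / 2 = n := by omega
  rw [h1, h2]
  simp only [List.count_cons_self]
  rcases Nat.even_or_odd ((Nat.digits 2 n).count 1) with ⟨m, hm⟩ | ⟨m, hm⟩ <;>
    · rw [hm]
      have ha : (m + m) % 2 = 0 := by omega
      have hb : (m + m + 1) % 2 = 1 := by omega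
      have hc : (2 * m + 1 + 1) % 2 = 0 := by omega
      have hd : (2 * m + 1) % 2 = 1 := by omega
      simp_all

lemma tmv1 : thueMorse 1 = true := by simpa [tm0] using tm_odd 0
lemma tmv2 : thueMorse 2 = true := by simpa [tmv1] using tm_even 1
lemma tmv3 : thueMorse 3 = false := by simpa [tmv1] using tm_odd 1
lemma tmv4 : thueMorse 4 = true := by simpa [tmv2] using tm_even 2
lemma tmv5 : thueMorse 5 = false := by simpa [tmv2] using tm_odd 2
lemma tmv6 : thueMorse 6 = false := by simpa [tmv3] using tm_even 3
lemma tmv7 : thueMorse 7 = true := by simpa [tmv3] using tm_odd 3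

lemma wordAt_one (w : ℕ → Bool) (i : ℕ) : wordAt w i 1 = [w i] := by
  unfold wordAt
  rw [show List.range 1 = [0] from rfl]
  simp

lemma wordAt_two (w : ℕ → Bool) (i : ℕ) : wordAt w i 2 = [w i, w (i + 1)] := by
  simp [wordAt, List.range_succ]

lemma mem_abOcc (i : ℕ) :
    i ∈ abOcc thueMorse [false, true] ↔ thueMorse i ≠ thueMorse (i + 1) := by
  have hw : wordAt thueMorse i ([false, true] : List Bool).length
      = [thueMorse i, thueMorse (i + 1)] := wordAt_two _ _
  unfold abOcc AbEquiv
  rw [Set.mem_setOf_eq, hw]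
  cases hb : thueMorse i <;> cases hb' : thueMorse (i + 1) <;>
    simp [Bool.forall_bool]

lemma even_mem_abOcc (n : ℕ) : 2 * n ∈ abOcc thueMorse [false, true] := by
  rw [mem_abOcc]
  rw [tm_odd n, tm_even n]
  cases thueMorse n <;> simp

/-- In the Thue–Morse word, the abelian class of `01` has exactly the four semi-abelian
returns `{0, 1, 01, 10}`, and exactly three abelian returns. -/
theorem stmt17 :
    semiAbReturns thueMorse [false, true] =
      {[false], [true], [false, true], [true, false]} ∧
    ExactlyKAbReturns thueMorse [false, true] 3 :=  by
  have hlen : ([false, true] : List Bool).length = 2 := rfl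
  have hset : semiAbReturns thueMorse [false, true] =
      ({[false], [true], [false, true], [true, false]} : Set (List Bool)) := by
    ext r
    constructor
    · rintro ⟨i, j, hi, hj, hij, hbet, rfl⟩
      have hjle : j ≤ i + 2 := by
        by_contra h
        push_neg at h
        rcases Nat.even_or_odd i with ⟨m, hm⟩ | ⟨m, hm⟩
        · exact hbet (2 * (m + 1)) (by omega) (by omega) (even_mem_abOcc (m + 1))
        · exact hbet (2 * (m + 1)) (by omega) (by omega) (even_mem_abOcc (m + 1))
      have : j = i + 1 ∨ j = i + 2 := by omega
      rcases this with rfl | rfl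
      · have : i + 1 - i = 1 := by omega
        rw [this, wordAt_one]
        cases thueMorse i <;> simp
      · have : i + 2 - i = 2 := by omega
        rw [this, wordAt_two]
        rw [mem_abOcc] at hi
        cases hb : thueMorse i <;> cases hb' : thueMorse (i + 1) <;>
          simp_all
    · intro hr
      simp only [Set.mem_insert_iff, Set.mem_singleton_iff] at hr
      rcases hr with rfl | rfl | rfl | rfl
      · -- [false] : i = 3, j = 4
        refine ⟨3, 4, ?_, ?_, by omega, ?_, ?_⟩
        · rw [mem_abOcc]; rw [show (3:ℕ)+1 = 4 from rfl, tmv3, tmv4]; simp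
        · rw [mem_abOcc]; rw [show (4:ℕ)+1 = 5 from rfl, tmv4, tmv5]; simp
        · intro k h1 h2; omega
        · rw [show (4:ℕ) - 3 = 1 from rfl, wordAt_one, tmv3]
      · -- [true] : i = 2, j = 3
        refine ⟨2, 3, ?_, ?_, by omega, ?_, ?_⟩
        · rw [mem_abOcc]; rw [show (2:ℕ)+1 = 3 from rfl, tmv2, tmv3]; simp
        · rw [mem_abOcc]; rw [show (3:ℕ)+1 = 4 from rfl, tmv3, tmv4]; simp
        · intro k h1 h2; omega
        · rw [show (3:ℕ) - 2 = 1 from rfl, wordAt_one, tmv2]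
      · -- [false, true] : i = 0, j = 2
        refine ⟨0, 2, ?_, ?_, by omega, ?_, ?_⟩
        · rw [mem_abOcc]; rw [show (0:ℕ)+1 = 1 from rfl, tm0, tmv1]; simp
        · rw [mem_abOcc]; rw [show (2:ℕ)+1 = 3 from rfl, tmv2, tmv3]; simp
        · intro k h1 h2
          have : k = 1 := by omega
          subst this
          rw [mem_abOcc, show (1:ℕ)+1 = 2 from rfl, tmv1, tmv2]
          simp
        · rw [show (2:ℕ) - 0 = 2 from rfl, wordAt_two, tm0,
            show (0:ℕ)+1 = 1 from rfl, tmv1]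
      · -- [true, false] : i = 4, j = 6
        refine ⟨4, 6, ?_, ?_, by omega, ?_, ?_⟩
        · rw [mem_abOcc]; rw [show (4:ℕ)+1 = 5 from rfl, tmv4, tmv5]; simp
        · rw [mem_abOcc]; rw [show (6:ℕ)+1 = 7 from rfl, tmv6, tmv7]; simp
        · intro k h1 h2
          have : k = 5 := by omega
          subst this
          rw [mem_abOcc, show (5:ℕ)+1 = 6 from rfl, tmv5, tmv6]
          simp
        · rw [show (6:ℕ) - 4 = 2 from rfl, wordAt_two, tmv4,
            show (4:ℕ)+1 = 5 from rfl, tmv5]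
  refine ⟨hset, ?_⟩
  refine ⟨![[false], [true], [false, true]], ?_, ?_, ?_⟩
  · intro i j h
    fin_cases i <;> fin_cases j <;>
      first
        | rfl
        | exact absurd (h false) (by decide)
        | exact absurd (h true) (by decide)
  · intro r hr
    rw [hset] at hr
    simp only [Set.mem_insert_iff, Set.mem_singleton_iff] at hr
    rcases hr with rfl | rfl | rfl | rfl
    · exact ⟨0, fun a => by cases a <;> rfl⟩
    · exact ⟨1, fun a => by cases a <;> rfl⟩
    · exact ⟨2, fun a => by cases a <;> rfl⟩
    · exact ⟨2, fun a => by cases a <;> rfl⟩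
  · intro i
    fin_cases i
    · exact ⟨[false], by rw [hset]; simp, fun a => by cases a <;> rfl⟩
    · exact ⟨[true], by rw [hset]; simp, fun a => by cases a <;> rfl⟩
    · exact ⟨[false, true], by rw [hset]; simp, fun a => by cases a <;> rfl⟩
end
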